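/- Let G be a finite abelian p-group with exponent q > 1, and let S be a sequence of ℓ terms from G with ℓ ≥ m·(p−1)q/p + D*(G), where m ≥ 0. Then ∑_{j ≥ 0} (p−1)^j N_j(S) ≡ 0 mod p^{m+1}, where N_j(S) denotes the number of (indexed) zero-sum subsequences of S of length j. -/

import Mathlib

open Finset AddMonoidAlgebra

set_option linter.unusedSectionVars false

namespace Stmt12Aux

variable {G : Type*} [AddCommGroup G] [DecidableEq G]

noncomputable def XX (h : G) : AddMonoidAlgebra ℤ G := AddMonoidAlgebra.single h 1

noncomputable def uu (h : G) : AddMonoidAlgebra ℤ G := 1 - XX h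

noncomputable def pC (p : ℕ) : AddMonoidAlgebra ℤ G := ((p : ℤ) : AddMonoidAlgebra ℤ G)

lemma XX_add (a b : G) : XX (a + b) = XX a * XX b := by
  simp [XX, AddMonoidAlgebra.single_mul_single]

lemma XX_zero : (XX (0 : G)) = 1 := by
  simp [XX, AddMonoidAlgebra.one_def]

lemma XX_nsmul (n : ℕ) (h : G) : XX (n • h) = XX h ^ n := by
  induction n with
  | zero => simp [XX_zero]
  | succ k ih => rw [succ_nsmul, XX_add, ih, pow_succ]

lemma uu_zero : uu (0 : G) = 0 := by simp [uu, XX_zero]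

lemma uu_add_eq (a b : G) : uu (a + b) = uu a + uu b - uu a * uu b := by
  simp only [uu, XX_add]; ring

noncomputable def V (h : G) (d : ℕ) : Submodule ℤ (AddMonoidAlgebra ℤ G) :=
  Submodule.span ℤ {x | ∃ a, d ≤ a ∧ x = uu h ^ a}

lemma pow_mem_V {h : G} {d a : ℕ} (hda : d ≤ a) : uu h ^ a ∈ V h d :=
  Submodule.subset_span ⟨a, hda, rfl⟩

lemma uu_mem_V (h : G) : uu h ∈ V h 1 := by
  simpa using pow_mem_V (h := h) (le_refl 1)

lemma V_mono {h : G} {d d' : ℕ} (hdd : d ≤ d') : V h d' ≤ V h d := by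
  apply Submodule.span_le.2
  rintro x ⟨a, ha, rfl⟩
  exact pow_mem_V (le_trans hdd ha)

lemma span_mul_mem {R : Type*} [CommRing R] {s t : Set R} {P : Submodule ℤ R}
    (hP : ∀ x ∈ s, ∀ y ∈ t, x * y ∈ P) {x y : R}
    (hx : x ∈ Submodule.span ℤ s) (hy : y ∈ Submodule.span ℤ t) : x * y ∈ P := by
  have h1 : Submodule.span ℤ s * Submodule.span ℤ t ≤ P := by
    rw [Submodule.span_mul_span]
    apply Submodule.span_le.2
    rintro z ⟨x', hx', y', hy', rfl⟩
    exact hP _ hx' _ hy'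
  exact h1 (Submodule.mul_mem_mul hx hy)

lemma V_mul_V {h : G} {d₁ d₂ : ℕ} {x y : AddMonoidAlgebra ℤ G}
    (hx : x ∈ V h d₁) (hy : y ∈ V h d₂) : x * y ∈ V h (d₁ + d₂) := by
  refine span_mul_mem ?_ hx hy
  rintro _ ⟨a, ha, rfl⟩ _ ⟨b, hb, rfl⟩
  rw [← pow_add]
  exact pow_mem_V (by omega)

lemma V_pow {h : G} {d : ℕ} {x : AddMonoidAlgebra ℤ G} (hx : x ∈ V h d) (n : ℕ) :
    x ^ n ∈ V h (n * d) := by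
  induction n with
  | zero => simpa using pow_mem_V (h := h) (le_refl 0)
  | succ k ih =>
    rw [pow_succ]
    have := V_mul_V ih hx
    rwa [show k * d + d = (k+1) * d by ring] at this

lemma uu_nsmul_mem (h : G) (n : ℕ) : uu (n • h) ∈ V h 1 := by
  induction n with
  | zero => rw [zero_smul, uu_zero]; exact zero_mem _
  | succ k ih =>
    rw [succ_nsmul, uu_add_eq]
    exact sub_mem (add_mem ih (uu_mem_V h)) (V_mono (by norm_num) (V_mul_V ih (uu_mem_V h)))

lemma V_nsmul_le (h : G) (n : ℕ) : V (n • h) 1 ≤ V h 1 := by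
  apply Submodule.span_le.2
  rintro x ⟨a, ha, rfl⟩
  have := V_pow (uu_nsmul_mem h n) a
  rw [mul_one] at this
  exact V_mono ha this

lemma intcast_mul_mem {R : Type*} [CommRing R] {P : Submodule ℤ R} {x : R}
    (c : ℤ) (hx : x ∈ P) : ((c : R)) * x ∈ P := by
  rw [← zsmul_eq_mul]; exact P.smul_mem c hx


def cint (p k : ℕ) : ℤ := (-1)^k * (p.choose k : ℤ) + (if k = p then 1 else 0)

lemma cint_dvd {p : ℕ} (hp : p.Prime) {k : ℕ} (hk : k ∈ Finset.Ico 1 (p+1)) :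
    (p : ℤ) ∣ cint p k := by
  rw [Finset.mem_Ico] at hk
  rcases eq_or_lt_of_le (show k ≤ p by omega) with h | h
  · subst h
    rcases hp.eq_two_or_odd' with h2 | hodd
    · subst h2; decide
    · simp [cint, hodd.neg_one_pow]
  · have : (p : ℤ) ∣ (p.choose k : ℤ) :=
      Int.natCast_dvd_natCast.2 (hp.dvd_choose_self (by omega) h)
    simp only [cint, if_neg (by omega : ¬ k = p), add_zero]
    exact Dvd.dvd.mul_left this _


lemma B1 {p : ℕ} (hp : p.Prime) (h : G) :
    ∃ d ∈ V h 1, uu h ^ p = uu (p • h) + pC p * d := by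
  classical
  set R := AddMonoidAlgebra ℤ G
  refine ⟨∑ k ∈ Finset.Ico 1 (p+1), ((cint p k / (p:ℤ) : ℤ) : R) * (XX h ^ k - 1), ?_, ?_⟩
  · apply Submodule.sum_mem
    intro k hk
    apply intcast_mul_mem
    have hx : XX h ^ k - 1 = -(uu (k • h)) := by rw [← XX_nsmul]; simp [uu]
    rw [hx]
    exact neg_mem (uu_nsmul_mem h k)
  · have hp2 := hp.two_le
    have e1 : uu h ^ p
        = ∑ m ∈ Finset.range (p+1), (-1 : R)^m * XX h ^ m * (p.choose m : R) := by
      have h0 : uu h = -XX h + 1 := by rw [uu]; ring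
      rw [h0, add_pow]
      refine Finset.sum_congr rfl (fun m _ => ?_)
      rw [neg_pow, one_pow, mul_one]
    have e2 : pC p * (∑ k ∈ Finset.Ico 1 (p+1), ((cint p k / (p:ℤ) : ℤ) : R) * (XX h ^ k - 1))
        = ∑ k ∈ Finset.Ico 1 (p+1), ((cint p k : ℤ) : R) * (XX h ^ k - 1) := by
      rw [Finset.mul_sum]
      refine Finset.sum_congr rfl (fun k hk => ?_)
      rw [← mul_assoc]
      congr 1
      rw [show pC p = (((p:ℤ)) : R) from rfl, ← Int.cast_mul, Int.mul_ediv_cancel' (cint_dvd hp hk)]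
    rw [e1, e2]
    have e3 : ∑ k ∈ Finset.Ico 1 (p+1), ((cint p k : ℤ) : R) * (XX h ^ k - 1)
        = (∑ k ∈ Finset.Ico 1 (p+1), ((cint p k : ℤ) : R) * XX h ^ k)
          - ((∑ k ∈ Finset.Ico 1 (p+1), cint p k : ℤ) : R) := by
      push_cast
      rw [← Finset.sum_sub_distrib]
      exact Finset.sum_congr rfl (fun k _ => by ring)
    have e4 : (∑ k ∈ Finset.Ico 1 (p+1), cint p k : ℤ) = 0 := by
      have hrange : ∑ k ∈ Finset.range (p+1), ((-1:ℤ)^k * (p.choose k : ℤ)) = 0 := by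
        rw [Int.alternating_sum_range_choose, if_neg hp.ne_zero]
      rw [Finset.range_eq_Ico, Finset.sum_eq_sum_Ico_succ_bot (by omega : 0 < p + 1)] at hrange
      norm_num at hrange
      simp only [cint, Finset.sum_add_distrib]
      have h2 : ∑ k ∈ Finset.Ico 1 (p+1), (if k = p then (1:ℤ) else 0) = 1 := by
        rw [Finset.sum_ite_eq' (Finset.Ico 1 (p+1)) p (fun _ => (1:ℤ)),
          if_pos (by rw [Finset.mem_Ico]; omega)]
      rw [h2]
      omega
    have e5 : ∑ k ∈ Finset.Ico 1 (p+1), ((cint p k : ℤ) : R) * XX h ^ k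
        = (∑ k ∈ Finset.Ico 1 (p+1), (-1 : R)^k * XX h ^ k * (p.choose k : R)) + XX h ^ p := by
      have : ∀ k, ((cint p k : ℤ) : R) = (-1:R)^k * (p.choose k : R) + (if k = p then 1 else 0) := by
        intro k
        by_cases hkp : k = p <;> simp [cint, hkp] <;> push_cast <;> ring
      calc ∑ k ∈ Finset.Ico 1 (p+1), ((cint p k : ℤ) : R) * XX h ^ k
          = ∑ k ∈ Finset.Ico 1 (p+1),
              ((-1:R)^k * XX h ^ k * (p.choose k : R) + (if k = p then XX h ^ k else 0)) := by
            refine Finset.sum_congr rfl (fun k _ => ?_)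
            rw [this k]
            by_cases hkp : k = p <;> simp [hkp] <;> ring
        _ = _ := by
            rw [Finset.sum_add_distrib]
            congr 1
            rw [Finset.sum_ite_eq' (Finset.Ico 1 (p+1)) p (fun k => XX h ^ k),
              if_pos (by rw [Finset.mem_Ico]; omega)]
    rw [e3, e4, e5]
    have e6 : uu (p • h) = 1 - XX h ^ p := by rw [uu, XX_nsmul]
    rw [e6]
    have e7 : ∑ m ∈ Finset.range (p+1), (-1 : R)^m * XX h ^ m * (p.choose m : R)
        = 1 + ∑ m ∈ Finset.Ico 1 (p+1), (-1 : R)^m * XX h ^ m * (p.choose m : R) := by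
      rw [Finset.range_eq_Ico, Finset.sum_eq_sum_Ico_succ_bot (by omega : 0 < p + 1)]
      simp
    rw [e7]
    push_cast
    ring


lemma pC_pow_eq {p j : ℕ} : (pC p : AddMonoidAlgebra ℤ G) ^ j = (((p:ℤ)^j : ℤ) : AddMonoidAlgebra ℤ G) := by
  rw [pC, Int.cast_pow]

lemma BIN {p : ℕ} {h : G} {x y : AddMonoidAlgebra ℤ G} {n : ℕ} (hn : 1 ≤ n)
    (hx : x ∈ V h 1) (hy : y ∈ V h 1) :
    ∃ s ∈ V h 1, (x + pC p * y) ^ n = x ^ n + pC p * s := by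
  refine ⟨∑ m ∈ Finset.range n,
      ((((p:ℤ)^(n-m-1) * (n.choose m : ℤ) : ℤ)) : AddMonoidAlgebra ℤ G) * (x^m * y^(n-m)), ?_, ?_⟩
  · apply Submodule.sum_mem; intro m hm
    apply intcast_mul_mem
    have h1 : x ^ m * y ^ (n - m) ∈ V h (m * 1 + (n - m) * 1) :=
      V_mul_V (V_pow hx m) (V_pow hy (n-m))
    refine V_mono ?_ h1
    rw [Finset.mem_range] at hm; omega
  · rw [add_pow, Finset.sum_range_succ]
    simp only [Nat.sub_self, pow_zero, mul_one, Nat.choose_self, Nat.cast_one]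
    rw [add_comm (x^n)]
    congr 1
    rw [Finset.mul_sum]
    refine Finset.sum_congr rfl fun m hm => ?_
    rw [Finset.mem_range] at hm
    have hj : n - m - 1 + 1 = n - m := by omega
    rw [mul_pow, ← hj]
    simp only [pC]
    push_cast
    ring

lemma BIN2 {p : ℕ} (hp : p.Prime) {h : G} {x y : AddMonoidAlgebra ℤ G}
    (hx : x ∈ V h 1) (hy : y ∈ V h 1) :
    ∃ s ∈ V h 1, (x + pC p * y) ^ p = x ^ p + pC p ^ 2 * s := by
  have hp2 := hp.two_le
  have key : ∀ m, m < p → ((p:ℤ))^2 ∣ (p:ℤ)^(p-m) * (p.choose m : ℤ) := by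
    intro m hm
    rcases eq_or_lt_of_le (show m + 1 ≤ p by omega) with he | hl
    · have h1 : p - m = 1 := by omega
      have h2 : p.choose m = p := by
        have h3 : m = p - 1 := by omega
        rw [h3, Nat.choose_symm (by omega : 1 ≤ p), Nat.choose_one_right]
      rw [h1, h2]
      exact ⟨1, by push_cast; ring⟩
    · have h1 : 2 ≤ p - m := by omega
      exact Dvd.dvd.mul_right (pow_dvd_pow _ h1) _
  refine ⟨∑ m ∈ Finset.range p,
      (((((p:ℤ)^(p-m) * (p.choose m : ℤ)) / (p:ℤ)^2 : ℤ)) : AddMonoidAlgebra ℤ G)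
        * (x^m * y^(p-m)), ?_, ?_⟩
  · apply Submodule.sum_mem; intro m hm
    apply intcast_mul_mem
    have h1 : x ^ m * y ^ (p - m) ∈ V h (m * 1 + (p - m) * 1) :=
      V_mul_V (V_pow hx m) (V_pow hy (p-m))
    refine V_mono ?_ h1
    rw [Finset.mem_range] at hm; omega
  · rw [add_pow, Finset.sum_range_succ]
    simp only [Nat.sub_self, pow_zero, mul_one, Nat.choose_self, Nat.cast_one]
    rw [add_comm (x^p)]
    congr 1
    rw [Finset.mul_sum]
    refine Finset.sum_congr rfl fun m hm => ?_
    rw [Finset.mem_range] at hm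
    have hc := Int.mul_ediv_cancel' (key m hm)
    calc x^m * (pC p * y)^(p-m) * ((p.choose m : ℕ) : AddMonoidAlgebra ℤ G)
        = ((((p:ℤ)^(p-m) * (p.choose m : ℤ)) : ℤ) : AddMonoidAlgebra ℤ G) * (x^m * y^(p-m)) := by
          rw [mul_pow, pC_pow_eq]
          push_cast
          ring
      _ = (pC p ^2 * (((((p:ℤ)^(p-m) * (p.choose m : ℤ)) / (p:ℤ)^2 : ℤ)) : AddMonoidAlgebra ℤ G))
            * (x^m * y^(p-m)) := by
          rw [pC_pow_eq, ← Int.cast_mul, hc]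
      _ = _ := by ring


lemma ClaimA {p : ℕ} (hp : p.Prime) (h : G) (t : ℕ) :
    ∃ x ∈ V h (p ^ t), ∃ y ∈ V h 1, uu ((p^t) • h) = x + pC p * y := by
  induction t with
  | zero =>
    refine ⟨uu h, by simpa using pow_mem_V (h := h) (le_refl 1), 0, zero_mem _, by simp⟩
  | succ t ih =>
    obtain ⟨x, hx, y, hy, hxy⟩ := ih
    have hx1 : x ∈ V h 1 := V_mono (Nat.one_le_pow _ _ hp.pos) hx
    obtain ⟨s, hs, hbin⟩ := BIN (p := p) (h := h) hp.one_lt.le hx1 hy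
    obtain ⟨d, hd, hB1⟩ := B1 hp ((p^t) • h)
    have hd' : d ∈ V h 1 := V_nsmul_le h (p^t) hd
    refine ⟨x ^ p, ?_, s - d, sub_mem hs hd', ?_⟩
    · have := V_pow hx p
      rwa [show p * p ^ t = p ^ (t+1) by rw [pow_succ]; ring] at this
    · have hsm : (p^(t+1)) • h = p • ((p^t) • h) := by
        rw [← mul_smul, pow_succ]; ring_nf
      rw [hsm]
      have h2 : uu (p • ((p^t) • h)) = uu ((p^t) • h) ^ p - pC p * d := by
        rw [hB1]; ring
      rw [h2, hxy, hbin]; ring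

lemma ClaimB {p : ℕ} (hp : p.Prime) (h : G) (t : ℕ) :
    ∃ d ∈ V h 1, uu h ^ (p ^ t) = uu ((p^t) • h) + pC p * d := by
  induction t with
  | zero => exact ⟨0, zero_mem _, by simp⟩
  | succ t ih =>
    obtain ⟨d, hd, hBd⟩ := ih
    obtain ⟨s, hs, hbin⟩ := BIN (p := p) (h := h) hp.one_lt.le (uu_nsmul_mem h (p^t)) hd
    obtain ⟨d₂, hd₂, hB1⟩ := B1 hp ((p^t) • h)
    have hd₂' : d₂ ∈ V h 1 := V_nsmul_le h (p^t) hd₂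
    refine ⟨d₂ + s, add_mem hd₂' hs, ?_⟩
    have h1 : uu h ^ (p^(t+1)) = (uu h ^ (p^t)) ^ p := by
      rw [← pow_mul, pow_succ]
    have hsm : (p^(t+1)) • h = p • ((p^t) • h) := by
      rw [← mul_smul, pow_succ]; ring_nf
    rw [h1, hBd, hbin, hB1, hsm]
    ring


lemma SV {p : ℕ} (hp : p.Prime) (h : G) {E : ℕ} (hE : 1 ≤ E) (h0 : (p^E) • h = 0) :
    ∃ v₁ ∈ V h (p^(E-1)), ∃ v₂ ∈ V h 1, uu h ^ (p^E) = pC p * v₁ + pC p ^ 2 * v₂ := by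
  classical
  obtain ⟨t, rfl⟩ : ∃ t, E = t + 1 := ⟨E - 1, by omega⟩
  simp only [Nat.add_sub_cancel]
  obtain ⟨d, hd, hBd⟩ := ClaimB hp h t
  obtain ⟨s, hs, hbin⟩ := BIN2 (p := p) (h := h) hp (uu_nsmul_mem h (p^t)) hd
  obtain ⟨d₂, hd₂, hB1⟩ := B1 hp ((p^t) • h)
  have hsm : (p^(t+1)) • h = p • ((p^t) • h) := by
    rw [← mul_smul, pow_succ]; ring_nf
  have hzero : uu (p • ((p^t) • h)) = 0 := by rw [← hsm, h0, uu_zero]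
  have hup : uu ((p^t) • h) ^ p = pC p * d₂ := by rw [hB1, hzero, zero_add]
  -- refine d₂
  obtain ⟨x, hx, y, hy, hxy⟩ := ClaimA hp h t
  have hd₂W : ∃ v ∈ V h (p^t), ∃ w ∈ V h 1, d₂ = v + pC p * w := by
    have hspan : d₂ ∈ (V h (p^t) ⊔
        Submodule.map (LinearMap.mulLeft ℤ (pC p : AddMonoidAlgebra ℤ G)) (V h 1) :
        Submodule ℤ (AddMonoidAlgebra ℤ G)) := by
      refine Submodule.span_le.2 ?_ hd₂
      rintro z ⟨a, ha, rfl⟩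
      obtain ⟨s', hs', hbin'⟩ := BIN (p := p) (h := h) ha
        (V_mono (Nat.one_le_pow _ _ hp.pos) hx) hy
      rw [← hxy] at hbin'
      rw [hbin']
      refine add_mem (Submodule.mem_sup_left ?_) (Submodule.mem_sup_right ?_)
      · have := V_pow hx a
        exact V_mono (le_trans (Nat.le_mul_of_pos_left _ (by omega)) (le_refl _)) this
      · exact ⟨s', hs', rfl⟩
    rw [Submodule.mem_sup] at hspan
    obtain ⟨v, hv, w', hw', hvw⟩ := hspan
    obtain ⟨w, hw, rfl⟩ := hw'
    exact ⟨v, hv, w, hw, hvw.symm⟩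
  obtain ⟨v, hv, w, hw, hd₂eq⟩ := hd₂W
  refine ⟨v, hv, w + s, add_mem hw hs, ?_⟩
  have h1 : uu h ^ (p^(t+1)) = (uu h ^ (p^t)) ^ p := by
    rw [← pow_mul, pow_succ]
  rw [h1, hBd, hbin, hup, hd₂eq]
  ring


section Multi

variable {r : ℕ} (EE : Fin r → G)

noncomputable def M (k : ℕ) : Submodule ℤ (AddMonoidAlgebra ℤ G) :=
  Submodule.span ℤ {x | ∃ a : Fin r → ℕ, k ≤ ∑ j, a j ∧ x = ∏ j, uu (EE j) ^ a j}

lemma mem_M_gen {k : ℕ} (a : Fin r → ℕ) (hk : k ≤ ∑ j, a j) :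
    (∏ j, uu (EE j) ^ a j) ∈ M EE k :=
  Submodule.subset_span ⟨a, hk, rfl⟩

lemma M_mono {k k' : ℕ} (hk : k ≤ k') : M EE k' ≤ M EE k := by
  apply Submodule.span_le.2
  rintro x ⟨a, ha, rfl⟩
  exact mem_M_gen EE a (le_trans hk ha)

lemma one_mem_M : (1 : AddMonoidAlgebra ℤ G) ∈ M EE 0 := by
  have h := mem_M_gen EE (fun _ => 0) (k := 0) (Nat.zero_le _)
  simpa using h

lemma M_mul {k₁ k₂ : ℕ} {x y : AddMonoidAlgebra ℤ G}
    (hx : x ∈ M EE k₁) (hy : y ∈ M EE k₂) : x * y ∈ M EE (k₁ + k₂) := by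
  refine span_mul_mem ?_ hx hy
  rintro _ ⟨a, ha, rfl⟩ _ ⟨b, hb, rfl⟩
  rw [← Finset.prod_mul_distrib]
  have : ∀ j, uu (EE j) ^ a j * uu (EE j) ^ b j = uu (EE j) ^ ((a + b) j) := by
    intro j; rw [← pow_add]; rfl
  rw [Finset.prod_congr rfl (fun j _ => this j)]
  refine mem_M_gen EE (a + b) ?_
  have : ∑ j, (a + b) j = ∑ j, a j + ∑ j, b j := by
    simp [Finset.sum_add_distrib]
  omega

lemma V_le_M (j : Fin r) (d : ℕ) : V (EE j) d ≤ M EE d := by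
  apply Submodule.span_le.2
  rintro x ⟨a, ha, rfl⟩
  have hprod : (∏ i, uu (EE i) ^ (Pi.single j a i)) = uu (EE j) ^ a := by
    rw [Finset.prod_eq_single_of_mem j (Finset.mem_univ j)]
    · rw [Pi.single_eq_same]
    · intro i _ hij
      rw [Pi.single_eq_of_ne hij, pow_zero]
  have hsum : ∑ i, Pi.single j a i = a := by
    rw [Finset.sum_eq_single_of_mem j (Finset.mem_univ j)]
    · rw [Pi.single_eq_same]
    · intro i _ hij
      rw [Pi.single_eq_of_ne hij]
  rw [← hprod]
  exact mem_M_gen EE _ (by rw [hsum]; exact ha)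

def goodSet : AddSubmonoid G where
  carrier := {h | ∀ k (x : AddMonoidAlgebra ℤ G), x ∈ M EE k → uu h * x ∈ M EE (k+1)}
  zero_mem' := by
    intro k x hx
    rw [uu_zero, zero_mul]
    exact zero_mem _
  add_mem' := by
    intro a b ha hb k x hx
    have h1 : uu (a + b) * x = uu a * x + uu b * x - uu a * (uu b * x) := by
      rw [uu_add_eq]; ring
    rw [h1]
    exact sub_mem (add_mem (ha k x hx) (hb k x hx))
      (M_mono EE (by omega) (ha (k+1) _ (hb k x hx)))

lemma EE_mem_good (j : Fin r) : EE j ∈ goodSet EE := by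
  intro k x hx
  have h1 : uu (EE j) ∈ M EE 1 := V_le_M EE j 1 (uu_mem_V (EE j))
  have := M_mul EE h1 hx
  rwa [add_comm] at this

lemma all_mem_good (hgen : ∀ h : G, ∃ n : Fin r → ℕ, h = ∑ j, n j • EE j) (h : G) :
    h ∈ goodSet EE := by
  obtain ⟨n, rfl⟩ := hgen h
  exact AddSubmonoid.sum_mem _ (fun j _ => AddSubmonoid.nsmul_mem _ (EE_mem_good EE j) (n j))

lemma prod_uu_mem_M (hgen : ∀ h : G, ∃ n : Fin r → ℕ, h = ∑ j, n j • EE j)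
    {ι : Type*} (T : Finset ι) (f : ι → G) :
    (∏ i ∈ T, uu (f i)) ∈ M EE T.card := by
  classical
  induction T using Finset.cons_induction with
  | empty => simpa using one_mem_M EE
  | cons i T hiT ih =>
    rw [Finset.prod_cons, Finset.card_cons]
    exact all_mem_good EE hgen (f i) _ _ ih

end Multi


noncomputable def pDiv (p c : ℕ) : Submodule ℤ (AddMonoidAlgebra ℤ G) where
  carrier := {x | (pC p)^c ∣ x}
  add_mem' := fun ha hb => dvd_add ha hb
  zero_mem' := dvd_zero _
  smul_mem' := fun c x hx => by
    rw [zsmul_eq_mul]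
    exact Dvd.dvd.mul_left hx _

lemma mem_pDiv {p c : ℕ} {x : AddMonoidAlgebra ℤ G} :
    x ∈ pDiv p c ↔ (pC p : AddMonoidAlgebra ℤ G)^c ∣ x := Iff.rfl

lemma master {p : ℕ} (hp : p.Prime) {r : ℕ} (EE : Fin r → G) (e : Fin r → ℕ)
    (horder : ∀ j, (p ^ e j) • EE j = 0) (hEzero : ∀ j, e j = 0 → EE j = 0)
    (φn D : ℕ) (hD : D = 1 + ∑ j, (p ^ e j - 1)) (hφ1 : 1 ≤ φn)
    (hineq1 : ∀ j, 1 ≤ e j → p ^ e j - p ^ (e j - 1) ≤ φn)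
    (hineq2 : ∀ j, p ^ e j ≤ 2 * φn + 1) :
    ∀ s k, s * φn + D ≤ k → M EE k ≤ pDiv p (s+1) := by
  intro s
  induction s using Nat.strong_induction_on with
  | _ s IH =>
    intro k hk
    apply Submodule.span_le.2
    rintro x ⟨a, hka, rfl⟩
    have hDa : D ≤ ∑ j, a j := le_trans (by omega) (le_trans hk hka)
    have hex : ∃ j, p ^ e j ≤ a j := by
      by_contra hc
      push_neg at hc
      have hle : ∀ j, a j ≤ p ^ e j - 1 := fun j => by have := hc j; omega
      have hsum : ∑ j, a j ≤ ∑ j, (p ^ e j - 1) := Finset.sum_le_sum (fun j _ => hle j)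
      omega
    obtain ⟨j, hj⟩ := hex
    by_cases hej : e j = 0
    · have h1 : uu (EE j) = 0 := by rw [hEzero j hej, uu_zero]
      have haj : a j ≠ 0 := by
        rw [hej] at hj; simp at hj; omega
      have h2 : (∏ i, uu (EE i) ^ a i) = 0 := by
        apply Finset.prod_eq_zero (Finset.mem_univ j)
        rw [h1]
        exact zero_pow haj
      show (pC p : AddMonoidAlgebra ℤ G)^(s+1) ∣ _
      rw [h2]
      exact dvd_zero _
    · have hE1 : 1 ≤ e j := by omega
      have hQle : p ^ (e j - 1) ≤ p ^ e j := Nat.pow_le_pow_right hp.pos (by omega)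
      have hQsum : p ^ e j ≤ ∑ i, a i :=
        le_trans hj (Finset.single_le_sum (fun i _ => Nat.zero_le (a i)) (Finset.mem_univ j))
      set b := Function.update a j (a j - p ^ e j) with hbdef
      have hsplit : (∏ i, uu (EE i) ^ a i)
          = uu (EE j) ^ (p ^ e j) * ∏ i, uu (EE i) ^ b i := by
        rw [hbdef]
        have h3 : ∀ i, uu (EE i) ^ (Function.update a j (a j - p ^ e j) i)
            = Function.update (fun i => uu (EE i) ^ a i) j (uu (EE j) ^ (a j - p ^ e j)) i := by
          intro i
          by_cases hij : i = j
          · subst hij; rw [Function.update_self, Function.update_self]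
          · rw [Function.update_of_ne hij, Function.update_of_ne hij]
        rw [Finset.prod_congr rfl (fun i _ => h3 i),
          Finset.prod_update_of_mem (Finset.mem_univ j),
          Finset.prod_eq_mul_prod_sdiff_singleton_of_mem (Finset.mem_univ j)
            (fun i => uu (EE i) ^ a i), ← mul_assoc, ← pow_add]
        congr 2
        omega
      have hsumb : ∑ i, b i = ∑ i, a i - p ^ e j := by
        rw [hbdef, Finset.sum_update_of_mem (Finset.mem_univ j)]
        have h4 : ∑ i, a i = ∑ i ∈ Finset.univ \ {j}, a i + a j :=
          Finset.sum_eq_sum_sdiff_singleton_add (Finset.mem_univ j) a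
        omega
      obtain ⟨v₁, hv₁, v₂, hv₂, hSV⟩ := SV hp (EE j) hE1 (horder j)
      have hP : (∏ i, uu (EE i) ^ b i) ∈ M EE (∑ i, a i - p ^ e j) :=
        mem_M_gen EE b (le_of_eq hsumb.symm)
      have hv1m : v₁ * (∏ i, uu (EE i) ^ b i)
          ∈ M EE (p ^ (e j - 1) + (∑ i, a i - p ^ e j)) :=
        M_mul EE (V_le_M EE j _ hv₁) hP
      have hv2m : v₂ * (∏ i, uu (EE i) ^ b i)
          ∈ M EE (1 + (∑ i, a i - p ^ e j)) :=
        M_mul EE (V_le_M EE j _ (V_mono (le_refl 1) hv₂)) hP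
      show (pC p : AddMonoidAlgebra ℤ G)^(s+1) ∣ _
      rw [hsplit, hSV, add_mul]
      have hterm1 : (pC p : AddMonoidAlgebra ℤ G)^(s+1) ∣ pC p * v₁ * (∏ i, uu (EE i) ^ b i) := by
        rcases s with _ | s'
        · rw [pow_one, mul_assoc]
          exact dvd_mul_right _ _
        · have hmul : (s'+1) * φn = s' * φn + φn := by ring
          have hk1 : s' * φn + D ≤ p ^ (e j - 1) + (∑ i, a i - p ^ e j) := by
            have hi1 := hineq1 j hE1
            have : (s'+1) * φn + D ≤ ∑ i, a i := le_trans hk hka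
            omega
          have hdvd1 := (IH s' (by omega) _ hk1) hv1m
          rw [mem_pDiv] at hdvd1
          rw [mul_assoc]
          calc (pC p : AddMonoidAlgebra ℤ G)^(s'+1+1) = pC p * (pC p)^(s'+1) := by ring
            _ ∣ pC p * (v₁ * ∏ i, uu (EE i) ^ b i) := mul_dvd_mul_left _ hdvd1
      have hterm2 : (pC p : AddMonoidAlgebra ℤ G)^(s+1) ∣ pC p ^ 2 * v₂ * (∏ i, uu (EE i) ^ b i) := by
        rcases s with _ | s'
        · rw [pow_one, mul_assoc, sq, mul_assoc]
          exact dvd_mul_right _ _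
        · rcases s' with _ | s''
          · rw [mul_assoc]
            exact Dvd.dvd.mul_right (by norm_num) _
          · have hmul : (s''+2) * φn = s'' * φn + φn + φn := by ring
            have hk2 : s'' * φn + D ≤ 1 + (∑ i, a i - p ^ e j) := by
              have hi2 := hineq2 j
              have : (s''+2) * φn + D ≤ ∑ i, a i := le_trans hk hka
              omega
            have hdvd2 := (IH s'' (by omega) _ hk2) hv2m
            rw [mem_pDiv] at hdvd2
            rw [mul_assoc]
            calc (pC p : AddMonoidAlgebra ℤ G)^(s''+2+1) = pC p ^2 * (pC p)^(s''+1) := by ring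
              _ ∣ pC p ^2 * (v₂ * ∏ i, uu (EE i) ^ b i) := mul_dvd_mul_left _ hdvd2
      exact dvd_add hterm1 hterm2


end Stmt12Aux

open Stmt12Aux in
theorem stmt12 (p : ℕ) (hp : p.Prime) (G : Type*) [AddCommGroup G] [Fintype G] [DecidableEq G]
    (r : ℕ) (qs e : Fin r → ℕ) (hqs : ∀ i, qs i = p ^ e i)
    (iso : G ≃+ ∀ i, ZMod (qs i))
    (q : ℕ) (hq : AddMonoid.exponent G = q) (hq1 : 1 < q)
    (m ℓ : ℕ) (g : Fin ℓ → G)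
    (hl : (ℓ : ℚ) ≥ (m : ℚ) * ((p : ℚ) - 1) * q / p + (1 + ∑ i, ((qs i : ℚ) - 1))) :
    (p : ℤ) ^ (m + 1) ∣
      ∑ j ∈ Finset.range (ℓ + 1),
        ((p : ℤ) - 1) ^ j *
          (((Finset.univ : Finset (Fin ℓ)).powersetCard j).filter
            (fun I => ∑ i ∈ I, g i = 0)).card := by
  classical
  have hNZ : ∀ i, NeZero (qs i) := fun i => ⟨by rw [hqs i]; exact (Nat.pow_pos hp.pos).ne'⟩
  set EE : Fin r → G := fun j => iso.symm (Pi.single j (1 : ZMod (qs j))) with hEE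
  -- order of generators
  have hsingle0 : ∀ j (n : ℕ), qs j ∣ n →
      n • (Pi.single j (1 : ZMod (qs j)) : ∀ i, ZMod (qs i)) = 0 := by
    intro j n hdvd
    ext i
    by_cases hij : i = j
    · subst hij
      simp only [Pi.smul_apply, Pi.single_eq_same, Pi.zero_apply, nsmul_eq_mul, mul_one]
      exact (ZMod.natCast_eq_zero_iff n (qs i)).2 hdvd
    · simp [Pi.single_eq_of_ne hij]
  have horder : ∀ j, (p ^ e j) • EE j = 0 := by
    intro j
    rw [hEE, ← map_nsmul, hsingle0 j _ (by rw [hqs j]), map_zero]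
  have hEzero : ∀ j, e j = 0 → EE j = 0 := by
    intro j hej
    have h1 : (1 : ZMod (qs j)) = 0 := by
      haveI := hNZ j
      rw [← Nat.cast_one, ZMod.natCast_eq_zero_iff]
      rw [hqs j, hej, pow_zero]
    rw [hEE]
    simp only [h1, Pi.single_zero, map_zero]
  -- generation
  have hgen : ∀ h : G, ∃ n : Fin r → ℕ, h = ∑ j, n j • EE j := by
    intro h
    refine ⟨fun j => ((iso h) j).val, ?_⟩
    have h1 : iso h = ∑ j, ((iso h) j).val • (Pi.single j (1 : ZMod (qs j)) : ∀ i, ZMod (qs i)) := by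
      ext i
      rw [Finset.sum_apply]
      rw [Finset.sum_eq_single_of_mem i (Finset.mem_univ i)]
      · haveI := hNZ i
        simp only [Pi.smul_apply, Pi.single_eq_same, nsmul_eq_mul, mul_one]
        exact (ZMod.natCast_rightInverse (iso h i)).symm
      · intro j _ hji
        simp [Pi.single_eq_of_ne (Ne.symm hji)]
    calc h = iso.symm (iso h) := (iso.symm_apply_apply h).symm
      _ = ∑ j, ((iso h) j).val • EE j := by
          conv_lhs => rw [h1]
          rw [map_sum]
          exact Finset.sum_congr rfl fun j _ => by rw [map_nsmul]
  -- p-power facts about q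
  have hqjdvd : ∀ j, p ^ e j ∣ q := by
    intro j
    haveI := hNZ j
    have h1 : q • EE j = 0 := by rw [← hq]; exact AddMonoid.exponent_nsmul_eq_zero _
    have h2 : q • (Pi.single j (1 : ZMod (qs j)) : ∀ i, ZMod (qs i)) = 0 := by
      have := congrArg iso h1
      rwa [map_nsmul, map_zero, hEE, AddEquiv.apply_symm_apply] at this
    have h3 := congrFun h2 j
    simp only [Pi.smul_apply, Pi.single_eq_same, nsmul_eq_mul, mul_one, Pi.zero_apply] at h3
    rw [← hqs j]
    exact (ZMod.natCast_eq_zero_iff q (qs j)).1 h3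
  have hpq : p ∣ q := by
    have hhq : ∀ x : G, (p ^ (∑ j, e j)) • x = 0 := by
      intro x
      apply iso.injective
      rw [map_nsmul, map_zero]
      ext i
      simp only [Pi.smul_apply, nsmul_eq_mul, Pi.zero_apply]
      have : ((p ^ (∑ j, e j) : ℕ) : ZMod (qs i)) = 0 := by
        haveI := hNZ i
        rw [ZMod.natCast_eq_zero_iff, hqs i]
        exact pow_dvd_pow p (Finset.single_le_sum (fun j _ => Nat.zero_le (e j)) (Finset.mem_univ i))
      rw [this, zero_mul]
    have hdq : q ∣ p ^ (∑ j, e j) := by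
      rw [← hq]
      exact AddMonoid.exponent_dvd_of_forall_nsmul_eq_zero hhq
    obtain ⟨f, hf, hqf⟩ := (Nat.dvd_prime_pow hp).1 hdq
    have hf1 : 1 ≤ f := by
      by_contra hc
      push_neg at hc
      interval_cases f
      · simp at hqf; omega
    rw [hqf]
    exact dvd_pow_self p (by omega)
  obtain ⟨w, hw⟩ := hpq
  have hqp : q / p = w := by rw [hw]; exact Nat.mul_div_cancel_left w hp.pos
  have hw1 : 1 ≤ w := by
    rcases Nat.eq_zero_or_pos w with h | h
    · subst h; simp at hw; omega
    · exact h
  have h2w : 2 * w ≤ p * w := Nat.mul_le_mul_right w hp.two_le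
  set φn := q - q / p with hφdef
  set D := 1 + ∑ j, (p ^ e j - 1) with hDdef
  have hφ1 : 1 ≤ φn := by rw [hφdef, hqp]; omega
  have hineq2 : ∀ j, p ^ e j ≤ 2 * φn + 1 := by
    intro j
    have hjq := Nat.le_of_dvd (by omega) (hqjdvd j)
    rw [hφdef, hqp]
    omega
  have hineq1 : ∀ j, 1 ≤ e j → p ^ e j - p ^ (e j - 1) ≤ φn := by
    intro j hej
    obtain ⟨c, hc⟩ := hqjdvd j
    have hc1 : 0 < c := by
      rcases Nat.eq_zero_or_pos c with h | h
      · subst h; omega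
      · exact h
    have hpW : p ^ e j = p * p ^ (e j - 1) := by
      conv_lhs => rw [show e j = (e j - 1) + 1 by omega]
      rw [pow_succ]
      ring
    have e1 : q / p = p ^ (e j - 1) * c := by
      rw [hc, hpW, mul_assoc, Nat.mul_div_cancel_left _ hp.pos]
    have e2 : φn = p ^ e j * c - p ^ (e j - 1) * c := by rw [hφdef, e1, hc]
    have e3 : p ^ e j * c - p ^ (e j - 1) * c = (p ^ e j - p ^ (e j - 1)) * c :=
      (Nat.sub_mul _ _ _).symm
    have e4 : (p ^ e j - p ^ (e j - 1)) ≤ (p ^ e j - p ^ (e j - 1)) * c :=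
      Nat.le_mul_of_pos_right _ hc1
    omega
  -- numeric hypothesis
  have hwq : w ≤ q := by omega
  have hlnat : m * φn + D ≤ ℓ := by
    have hphiQ : (φn : ℚ) = ((p:ℚ) - 1) * (q:ℚ) / (p:ℚ) := by
      have hqQ : (q : ℚ) = (p : ℚ) * (w : ℚ) := by exact_mod_cast congrArg (Nat.cast (R := ℚ)) hw
      have h1 : (φn : ℚ) = (q : ℚ) - (w : ℚ) := by
        rw [hφdef, hqp, Nat.cast_sub hwq]
      rw [h1, hqQ]
      have hp0 : (p : ℚ) ≠ 0 := by exact_mod_cast hp.pos.ne'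
      field_simp
    have hsumQ : ((∑ j, (p ^ e j - 1) : ℕ) : ℚ) = ∑ i, ((qs i : ℚ) - 1) := by
      rw [Nat.cast_sum]
      refine Finset.sum_congr rfl fun i _ => ?_
      rw [Nat.cast_sub (Nat.one_le_pow _ _ hp.pos), hqs i]
      push_cast
      ring
    have key : ((m * φn + D : ℕ) : ℚ) ≤ (ℓ : ℚ) := by
      have heq : ((m * φn + D : ℕ) : ℚ)
          = (m : ℚ) * ((p : ℚ) - 1) * (q:ℚ) / (p:ℚ) + (1 + ∑ i, ((qs i : ℚ) - 1)) := by
        rw [hDdef]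
        push_cast [hphiQ, hsumQ]
        ring
      rw [heq]
      exact hl
    exact_mod_cast key
  -- the product
  set R := AddMonoidAlgebra ℤ G
  set γ : ℤ := (p : ℤ) - 1 with hγ
  set PP : R := ∏ i : Fin ℓ, ((1 : R) + AddMonoidAlgebra.single (g i) γ) with hPP
  have hfac : ∀ i : Fin ℓ, (1 : R) + AddMonoidAlgebra.single (g i) γ
      = pC p + ((-γ : ℤ) : R) * uu (g i) := by
    intro i
    have h1 : ((γ : ℤ) : R) * XX (g i) = AddMonoidAlgebra.single (g i) γ := by
      rw [XX, AddMonoidAlgebra.intCast_def, AddMonoidAlgebra.single_mul_single, zero_add, mul_one]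
      norm_cast
    have h2 : (pC p : R) - ((γ : ℤ) : R) = 1 := by
      rw [pC, ← Int.cast_sub, hγ]
      norm_num
    calc (1 : R) + AddMonoidAlgebra.single (g i) γ
        = ((pC p : R) - ((γ:ℤ):R)) + ((γ:ℤ):R) * XX (g i) := by rw [h2, h1]
      _ = pC p + ((-γ : ℤ) : R) * uu (g i) := by rw [uu]; push_cast; ring
  have hdvdP : (pC p : R)^(m+1) ∣ PP := by
    rw [hPP, Finset.prod_congr rfl (fun i _ => hfac i), Finset.prod_add]
    apply Finset.dvd_sum
    intro T hT
    rw [Finset.prod_const, Finset.prod_mul_distrib, Finset.prod_const]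
    have hcard : (Finset.univ \ T).card = ℓ - T.card := by
      rw [Finset.card_sdiff_of_subset (Finset.mem_powerset.1 hT), Finset.card_univ, Fintype.card_fin]
    have hMm : (∏ i ∈ Finset.univ \ T, uu (g i)) ∈ M EE (ℓ - T.card) := by
      rw [← hcard]
      exact prod_uu_mem_M EE hgen _ _
    have hTl : T.card ≤ ℓ := by
      have := Finset.card_le_card (Finset.mem_powerset.1 hT)
      rwa [Finset.card_univ, Fintype.card_fin] at this
    by_cases hTm : T.card ≤ m
    · have hmm : (m - T.card) * φn + T.card * φn = m * φn := by
        rw [← add_mul]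
        congr 1
        omega
      have hTφ : T.card ≤ T.card * φn := Nat.le_mul_of_pos_right _ (by omega)
      have hk : (m - T.card) * φn + D ≤ ℓ - T.card := by omega
      have hdvd := master hp EE e horder hEzero φn D hDdef hφ1 hineq1 hineq2 (m - T.card) _ hk hMm
      rw [mem_pDiv] at hdvd
      have h5 : (pC p : R)^(m+1) = (pC p)^T.card * (pC p)^(m - T.card + 1) := by
        rw [← pow_add]; congr 1; omega
      rw [h5]
      exact mul_dvd_mul_left _ (Dvd.dvd.mul_left hdvd _)
    · exact Dvd.dvd.mul_right (pow_dvd_pow _ (by omega)) _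
  have hprodB : PP = ∑ T ∈ Finset.powerset (Finset.univ : Finset (Fin ℓ)),
      AddMonoidAlgebra.single (∑ i ∈ T, g i) (γ ^ T.card) := by
    rw [hPP,
      Finset.prod_congr rfl (fun i _ => add_comm (1:R) (AddMonoidAlgebra.single (g i) γ)),
      Finset.prod_add]
    refine Finset.sum_congr rfl fun T hT => ?_
    rw [Finset.prod_const_one, mul_one, AddMonoidAlgebra.prod_single, Finset.prod_const]
  have hcoeff : (PP : AddMonoidAlgebra ℤ G).coeff 0
      = ∑ j ∈ Finset.range (ℓ+1), γ^j *
          ((((Finset.univ : Finset (Fin ℓ)).powersetCard j).filter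
            (fun I => ∑ i ∈ I, g i = 0)).card : ℤ) := by
    rw [hprodB, AddMonoidAlgebra.coeff_sum, Finsupp.finset_sum_apply]
    have hap : ∀ T ∈ Finset.powerset (Finset.univ : Finset (Fin ℓ)),
        (AddMonoidAlgebra.single (∑ i ∈ T, g i) (γ ^ T.card) : R).coeff 0
          = if (∑ i ∈ T, g i) = 0 then γ^T.card else 0 := fun T _ => Finsupp.single_apply
    rw [Finset.sum_congr rfl hap, Finset.sum_powerset, Finset.card_univ, Fintype.card_fin]
    refine Finset.sum_congr rfl fun j hj => ?_
    have h6 : ∀ T ∈ Finset.powersetCard j (Finset.univ : Finset (Fin ℓ)),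
        (if (∑ i ∈ T, g i) = 0 then γ^T.card else 0)
          = if (∑ i ∈ T, g i) = 0 then γ^j else 0 := by
      intro T hT
      rw [(Finset.mem_powersetCard.1 hT).2]
    rw [Finset.sum_congr rfl h6, ← Finset.sum_filter, Finset.sum_const, nsmul_eq_mul]
    ring
  obtain ⟨Y, hY⟩ := hdvdP
  have hYc : (PP : AddMonoidAlgebra ℤ G).coeff 0 = (p:ℤ)^(m+1) * (Y.coeff 0) := by
    rw [hY, pC_pow_eq, AddMonoidAlgebra.intCast_def]
    exact AddMonoidAlgebra.coeff_single_zero_mul Y ((p:ℤ)^(m+1)) 0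
  rw [← hcoeff, hYc]
  exact Dvd.intro _ rfl
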